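/- Let n ≥ 1, d ≥ 2 and k ∈ {1,…,d−1} be integers and let p₁,…,pₙ ∈ ℝ^d. With the notation of Algorithm kSM-Approx — X* a minimizer of the relaxed problem, X* = Vᵀ D V a spectral decomposition with V orthogonal, ζ the indicator of a set of d−k smallest entries of q where q_j = ∑_{i=1}^n |(V pᵢ)_j|, E = Vᵀ diag(ζ) V, and S ⊆ ℝ^d the kernel of E (equivalently, the column space of (I_d − E)) — the subspace S is a k-dimensional linear subspace of ℝ^d and ∑_{i=1}^n dist(pᵢ, S) ≤ √d · ksm(P,k), where dist(p, S) = inf_{s ∈ S} ‖p − s‖₂. -/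

import Mathlib

open Matrix

/-- The Euclidean (ℓ₂) norm of a vector in ℝ^d. -/
noncomputable def l2norm {d : ℕ} (u : Fin d → ℝ) : ℝ := Real.sqrt (∑ j, (u j) ^ 2)

/-- The Euclidean distance from a point `p` to a subset `S ⊆ ℝ^d`. -/
noncomputable def distToSet {d : ℕ} (p : Fin d → ℝ) (S : Set (Fin d → ℝ)) : ℝ :=
  sInf {r : ℝ | ∃ s ∈ S, r = l2norm (p - s)}

lemma l2norm_nonneg {d : ℕ} (u : Fin d → ℝ) : 0 ≤ l2norm u := Real.sqrt_nonneg _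

lemma l2norm_le_sum_abs {d : ℕ} (u : Fin d → ℝ) : l2norm u ≤ ∑ j, |u j| := by
  have h1 : ∑ j, u j ^ 2 = ∑ j, |u j| ^ 2 := by simp [sq_abs]
  rw [l2norm, h1]
  calc Real.sqrt (∑ j, |u j| ^ 2) ≤ Real.sqrt ((∑ j, |u j|) ^ 2) :=
        Real.sqrt_le_sqrt (Finset.sum_sq_le_sq_sum_of_nonneg (fun j _ => abs_nonneg _))
    _ = ∑ j, |u j| := Real.sqrt_sq (Finset.sum_nonneg fun j _ => abs_nonneg _)

lemma sum_abs_le_sqrt_l2 {d : ℕ} (u : Fin d → ℝ) : ∑ j, |u j| ≤ Real.sqrt d * l2norm u := by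
  have hcs := Finset.sum_mul_sq_le_sq_mul_sq Finset.univ (fun _ => (1:ℝ)) (fun j => |u j|)
  have h2 : (∑ j, |u j|) ^ 2 ≤ (d : ℝ) * ∑ j, u j ^ 2 := by
    simpa [sq_abs] using hcs
  calc ∑ j, |u j| = Real.sqrt ((∑ j, |u j|) ^ 2) :=
        (Real.sqrt_sq (Finset.sum_nonneg fun j _ => abs_nonneg _)).symm
    _ ≤ Real.sqrt ((d : ℝ) * ∑ j, u j ^ 2) := Real.sqrt_le_sqrt h2
    _ = Real.sqrt d * l2norm u := by
        rw [Real.sqrt_mul (by positivity), l2norm]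

lemma l2norm_transpose_mulVec {d : ℕ} (V : Matrix (Fin d) (Fin d) ℝ) (hVVT : V * Vᵀ = 1)
    (u : Fin d → ℝ) : l2norm (Vᵀ *ᵥ u) = l2norm u := by
  unfold l2norm
  congr 1
  have h1 : ∀ w : Fin d → ℝ, ∑ j, w j ^ 2 = w ⬝ᵥ w := by
    intro w; simp [dotProduct, sq]
  rw [h1, h1, Matrix.dotProduct_mulVec, Matrix.vecMul_transpose, Matrix.mulVec_mulVec,
    hVVT, Matrix.one_mulVec]

lemma psd_diag_nonneg {d : ℕ} {M : Matrix (Fin d) (Fin d) ℝ} (h : M.PosSemidef) (j : Fin d) :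
    0 ≤ M j j := by
  have h2 := h.dotProduct_mulVec_nonneg (Pi.single j 1)
  have : star (Pi.single j 1 : Fin d → ℝ) ⬝ᵥ M *ᵥ (Pi.single j 1) = M j j := by
    simp [dotProduct, Matrix.mulVec, Pi.single_apply, mul_ite, ite_mul, Finset.sum_ite_eq]
  rwa [this] at h2

lemma real_conjT {d : ℕ} (X : Matrix (Fin d) (Fin d) ℝ) : Xᴴ = Xᵀ := by
  ext i j; simp [Matrix.conjTranspose_apply]

/-- trace of a real idempotent matrix equals its rank. -/
lemma trace_eq_rank_of_idem {d : ℕ} (X : Matrix (Fin d) (Fin d) ℝ) (h : X * X = X) :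
    X.trace = (X.rank : ℝ) := by
  have hff : X.mulVecLin ∘ₗ X.mulVecLin = X.mulVecLin := by
    rw [← Matrix.mulVecLin_mul, h]
  have hproj : LinearMap.IsProj (LinearMap.range X.mulVecLin) X.mulVecLin := by
    constructor
    · intro x; exact LinearMap.mem_range_self _ x
    · rintro x ⟨y, rfl⟩
      exact congrFun (congrArg DFunLike.coe hff) y
  have htr := hproj.trace
  rw [LinearMap.trace_eq_matrix_trace ℝ (Pi.basisFun ℝ (Fin d)),
    LinearMap.toMatrix_eq_toMatrix'] at htr
  have hXX : LinearMap.toMatrix' X.mulVecLin = X := by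
    rw [← Matrix.toLin'_apply' X, LinearMap.toMatrix'_toLin']
  rw [hXX] at htr
  rw [htr]
  rfl

lemma key_ineq {d : ℕ} (Ind : Finset (Fin d)) (hne : Ind.Nonempty)
    (q lam : Fin d → ℝ) (_hq0 : ∀ j, 0 ≤ q j)
    (hmin : ∀ j ∈ Ind, ∀ j' ∉ Ind, q j ≤ q j')
    (h0 : ∀ j, 0 ≤ lam j) (h1 : ∀ j, lam j ≤ 1)
    (hsum : ∑ j, lam j = (Ind.card : ℝ)) :
    ∑ j ∈ Ind, q j ≤ ∑ j, lam j * q j := by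
  obtain ⟨j₀, hj₀, hmax⟩ := Ind.exists_max_image q hne
  set t := q j₀ with ht
  have hA : ∑ j ∈ Ind, (1 - lam j) * q j ≤ (∑ j ∈ Ind, (1 - lam j)) * t := by
    rw [Finset.sum_mul]
    refine Finset.sum_le_sum fun j hj => ?_
    exact mul_le_mul_of_nonneg_left (hmax j hj) (by linarith [h1 j])
  have hB : (∑ j ∈ Indᶜ, lam j) * t ≤ ∑ j ∈ Indᶜ, lam j * q j := by
    rw [Finset.sum_mul]
    refine Finset.sum_le_sum fun j hj => ?_
    exact mul_le_mul_of_nonneg_left (hmin j₀ hj₀ j (Finset.mem_compl.mp hj)) (h0 j)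
  have hsplit : ∑ j ∈ Ind, lam j + ∑ j ∈ Indᶜ, lam j = (Ind.card : ℝ) := by
    rw [Finset.sum_add_sum_compl, hsum]
  have heq : ∑ j ∈ Ind, (1 - lam j) = ∑ j ∈ Indᶜ, lam j := by
    rw [Finset.sum_sub_distrib, Finset.sum_const, nsmul_eq_mul, mul_one]
    linarith
  have hsplitq : ∑ j ∈ Ind, lam j * q j + ∑ j ∈ Indᶜ, lam j * q j = ∑ j, lam j * q j :=
    Finset.sum_add_sum_compl Ind _
  have hqdecomp : ∑ j ∈ Ind, q j = ∑ j ∈ Ind, lam j * q j + ∑ j ∈ Ind, (1 - lam j) * q j := by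
    rw [← Finset.sum_add_distrib]
    refine Finset.sum_congr rfl fun j _ => by ring
  rw [hqdecomp, ← hsplitq]
  have : ∑ j ∈ Ind, (1 - lam j) * q j ≤ ∑ j ∈ Indᶜ, lam j * q j := by
    calc ∑ j ∈ Ind, (1 - lam j) * q j ≤ (∑ j ∈ Ind, (1 - lam j)) * t := hA
      _ = (∑ j ∈ Indᶜ, lam j) * t := by rw [heq]
      _ ≤ ∑ j ∈ Indᶜ, lam j * q j := hB
  linarith

theorem stmt_8 (n d k : ℕ) (hn : 1 ≤ n) (hd : 2 ≤ d) (hk1 : 1 ≤ k) (hk2 : k ≤ d - 1)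
    (p : Fin n → Fin d → ℝ)
    (Xstar : Matrix (Fin d) (Fin d) ℝ) (ystar : Fin n → ℝ)
    (hsym : Xstarᵀ = Xstar) (htr : Xstar.trace = ((d - k : ℕ) : ℝ))
    (hpsd : Xstar.PosSemidef) (hpsd' : (1 - Xstar).PosSemidef)
    (hy : ∀ i, l2norm (Xstar.mulVec (p i)) ≤ ystar i)
    (hopt : ∑ i, ystar i
      = sInf {r : ℝ | ∃ (X : Matrix (Fin d) (Fin d) ℝ) (y : Fin n → ℝ),
          Xᵀ = X ∧ X.trace = ((d - k : ℕ) : ℝ) ∧ X.PosSemidef ∧ (1 - X).PosSemidef ∧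
          (∀ i, l2norm (X.mulVec (p i)) ≤ y i) ∧ r = ∑ i, y i})
    (V : Matrix (Fin d) (Fin d) ℝ) (hV : Vᵀ * V = 1)
    (Dvec : Fin d → ℝ) (hdecomp : Xstar = Vᵀ * Matrix.diagonal Dvec * V)
    (q : Fin d → ℝ) (hq : ∀ j, q j = ∑ i, |V.mulVec (p i) j|)
    (Ind : Finset (Fin d)) (hcard : Ind.card = d - k)
    (hmin : ∀ j ∈ Ind, ∀ j' ∉ Ind, q j ≤ q j')
    (ζ : Fin d → ℝ) (hζ : ∀ j : Fin d, ζ j = if j ∈ Ind then 1 else 0)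
    (E : Matrix (Fin d) (Fin d) ℝ) (hE : E = Vᵀ * Matrix.diagonal ζ * V)
    (S : Submodule ℝ (Fin d → ℝ)) (hS : S = LinearMap.ker E.mulVecLin) :
    Module.finrank ℝ S = k ∧
    ∑ i, distToSet (p i) (S : Set (Fin d → ℝ))
      ≤ Real.sqrt d * sInf {r : ℝ | ∃ X : Matrix (Fin d) (Fin d) ℝ,
          X * X = X ∧ Xᵀ = X ∧ X.rank = d - k ∧ r = ∑ i, l2norm (X.mulVec (p i))} := by
  classical
  have hVVT : V * Vᵀ = 1 := mul_eq_one_comm.mp hV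
  have hdetV : IsUnit V.det := by
    have hdd : Vᵀ.det * V.det = 1 := by rw [← Matrix.det_mul, hV, Matrix.det_one]
    exact IsUnit.of_mul_eq_one _ (by rw [mul_comm] at hdd; exact hdd)
  have hdetVT : IsUnit Vᵀ.det := by rw [Matrix.det_transpose]; exact hdetV
  have hζ2 : ∀ j, ζ j * ζ j = ζ j := by intro j; rw [hζ]; split <;> norm_num
  have hdd : Matrix.diagonal ζ * Matrix.diagonal ζ = Matrix.diagonal ζ := by
    rw [Matrix.diagonal_mul_diagonal]
    exact congrArg _ (funext hζ2)
  have hEE : E * E = E := by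
    rw [hE]
    calc Vᵀ * Matrix.diagonal ζ * V * (Vᵀ * Matrix.diagonal ζ * V)
        = Vᵀ * Matrix.diagonal ζ * ((V * Vᵀ) * (Matrix.diagonal ζ * V)) := by
          simp only [Matrix.mul_assoc]
      _ = Vᵀ * Matrix.diagonal ζ * V := by
          rw [hVVT, Matrix.one_mul, ← Matrix.mul_assoc, Matrix.mul_assoc Vᵀ, hdd]
  have hET : Eᵀ = E := by
    rw [hE, Matrix.transpose_mul, Matrix.transpose_mul, Matrix.transpose_transpose,
      Matrix.diagonal_transpose, Matrix.mul_assoc]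
  -- rank of E
  have hrankE : E.rank = d - k := by
    rw [hE, Matrix.rank_mul_eq_left_of_isUnit_det V _ hdetV,
      Matrix.rank_mul_eq_right_of_isUnit_det Vᵀ _ hdetVT, Matrix.rank_diagonal, ← hcard,
      Fintype.card_subtype]
    congr 1
    ext j
    rw [Finset.mem_filter]
    constructor
    · rintro ⟨-, hj⟩
      by_contra hjn
      exact hj (by rw [hζ j, if_neg hjn])
    · intro hj
      refine ⟨Finset.mem_univ _, ?_⟩
      rw [hζ j, if_pos hj]
      norm_num
  -- dimension of S
  have hfrS : Module.finrank ℝ S = k := by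
    have hrn := LinearMap.finrank_range_add_finrank_ker E.mulVecLin
    rw [Module.finrank_fintype_fun_eq_card, Fintype.card_fin] at hrn
    have h1 : Module.finrank ℝ (LinearMap.range E.mulVecLin) = d - k := hrankE
    rw [hS]
    omega
  refine ⟨hfrS, ?_⟩
  have hIndne : Ind.Nonempty := Finset.card_pos.mp (by omega)
  -- distance bound
  have hdist : ∀ i, distToSet (p i) (S : Set (Fin d → ℝ)) ≤ l2norm (E *ᵥ p i) := by
    intro i
    apply csInf_le
    · exact ⟨0, by rintro r ⟨s, hs, rfl⟩; exact l2norm_nonneg _⟩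
    · refine ⟨p i - E *ᵥ p i, ?_, ?_⟩
      · have : E *ᵥ (p i - E *ᵥ p i) = 0 := by
          rw [Matrix.mulVec_sub, Matrix.mulVec_mulVec, hEE, sub_self]
        rw [hS]
        exact LinearMap.mem_ker.mpr (by rw [Matrix.mulVecLin_apply]; exact this)
      · rw [sub_sub_cancel]
  -- per-point bound via ζ
  have hEp : ∀ i, l2norm (E *ᵥ p i) ≤ ∑ j ∈ Ind, |(V *ᵥ p i) j| := by
    intro i
    have h1 : E *ᵥ p i = Vᵀ *ᵥ (Matrix.diagonal ζ *ᵥ (V *ᵥ p i)) := by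
      rw [hE, Matrix.mulVec_mulVec, Matrix.mulVec_mulVec]
    rw [h1, l2norm_transpose_mulVec V hVVT]
    calc l2norm (Matrix.diagonal ζ *ᵥ (V *ᵥ p i))
        ≤ ∑ j, |(Matrix.diagonal ζ *ᵥ (V *ᵥ p i)) j| := l2norm_le_sum_abs _
      _ = ∑ j, (if j ∈ Ind then |(V *ᵥ p i) j| else 0) := by
          refine Finset.sum_congr rfl fun j _ => ?_
          rw [Matrix.mulVec_diagonal, hζ j]
          split <;> simp
      _ = ∑ j ∈ Ind, |(V *ᵥ p i) j| := by
          rw [Finset.sum_ite_mem, Finset.univ_inter]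
  -- eigenvalue facts
  have hD : Matrix.diagonal Dvec = V * Xstar * Vᵀ := by
    rw [hdecomp]
    symm
    calc V * (Vᵀ * Matrix.diagonal Dvec * V) * Vᵀ
        = (V * Vᵀ) * Matrix.diagonal Dvec * (V * Vᵀ) := by simp only [Matrix.mul_assoc]
      _ = Matrix.diagonal Dvec := by rw [hVVT, Matrix.one_mul, Matrix.mul_one]
  have hDP : (Matrix.diagonal Dvec).PosSemidef := by
    rw [hD, show Vᵀ = Vᴴ from (real_conjT V).symm]
    exact hpsd.mul_mul_conjTranspose_same V
  have hD1P : (1 - Matrix.diagonal Dvec).PosSemidef := by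
    have : (1 : Matrix (Fin d) (Fin d) ℝ) - Matrix.diagonal Dvec = V * (1 - Xstar) * Vᵀ := by
      rw [Matrix.mul_sub, Matrix.mul_one, Matrix.sub_mul, hVVT, hD]
    rw [this, show Vᵀ = Vᴴ from (real_conjT V).symm]
    exact hpsd'.mul_mul_conjTranspose_same V
  have hD0 : ∀ j, 0 ≤ Dvec j := by
    intro j
    have := psd_diag_nonneg hDP j
    rwa [Matrix.diagonal_apply_eq] at this
  have hD1 : ∀ j, Dvec j ≤ 1 := by
    intro j
    have := psd_diag_nonneg hD1P j
    simp only [Matrix.sub_apply, Matrix.one_apply_eq, Matrix.diagonal_apply_eq] at this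
    linarith
  have htrD : ∑ j, Dvec j = (Ind.card : ℝ) := by
    have h1 : (Matrix.diagonal Dvec).trace = Xstar.trace := by
      rw [hD, Matrix.trace_mul_comm, ← Matrix.mul_assoc, hV, Matrix.one_mul]
    rw [Matrix.trace_diagonal] at h1
    rw [h1, htr, hcard]
  have hq0 : ∀ j, 0 ≤ q j := by
    intro j; rw [hq]; exact Finset.sum_nonneg fun i _ => abs_nonneg _
  -- combinatorial step
  have hkey : ∑ j ∈ Ind, q j ≤ ∑ j, Dvec j * q j :=
    key_ineq Ind hIndne q Dvec hq0 hmin hD0 hD1 htrD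
  -- Cauchy–Schwarz step
  have hstep : ∑ j, Dvec j * q j ≤ Real.sqrt d * ∑ i, l2norm (Xstar *ᵥ p i) := by
    have heq1 : ∑ j, Dvec j * q j = ∑ i, ∑ j, |(Matrix.diagonal Dvec *ᵥ (V *ᵥ p i)) j| := by
      have : ∀ j, Dvec j * q j = ∑ i, |(Matrix.diagonal Dvec *ᵥ (V *ᵥ p i)) j| := by
        intro j
        rw [hq, Finset.mul_sum]
        refine Finset.sum_congr rfl fun i _ => ?_
        rw [Matrix.mulVec_diagonal, abs_mul, abs_of_nonneg (hD0 j)]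
      rw [Finset.sum_congr rfl fun j _ => this j, Finset.sum_comm]
    rw [heq1, Finset.mul_sum]
    refine Finset.sum_le_sum fun i _ => ?_
    have h2 : Xstar *ᵥ p i = Vᵀ *ᵥ (Matrix.diagonal Dvec *ᵥ (V *ᵥ p i)) := by
      rw [hdecomp, Matrix.mulVec_mulVec, Matrix.mulVec_mulVec]
    rw [h2, l2norm_transpose_mulVec V hVVT]
    exact sum_abs_le_sqrt_l2 _
  -- relate to relaxed optimum and ksm
  set KSM := {r : ℝ | ∃ X : Matrix (Fin d) (Fin d) ℝ,
      X * X = X ∧ Xᵀ = X ∧ X.rank = d - k ∧ r = ∑ i, l2norm (X.mulVec (p i))} with hKSM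
  set REL := {r : ℝ | ∃ (X : Matrix (Fin d) (Fin d) ℝ) (y : Fin n → ℝ),
      Xᵀ = X ∧ X.trace = ((d - k : ℕ) : ℝ) ∧ X.PosSemidef ∧ (1 - X).PosSemidef ∧
      (∀ i, l2norm (X.mulVec (p i)) ≤ y i) ∧ r = ∑ i, y i} with hREL
  have hsub : KSM ⊆ REL := by
    rintro r ⟨X, hXX, hXT, hXr, rfl⟩
    refine ⟨X, fun i => l2norm (X.mulVec (p i)), hXT, ?_, ?_, ?_, fun i => le_refl _, rfl⟩
    · rw [trace_eq_rank_of_idem X hXX, hXr]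
    · have h1 : X = Xᴴ * X := by rw [real_conjT, hXT, hXX]
      rw [h1]; exact Matrix.posSemidef_conjTranspose_mul_self X
    · have h2 : (1 - X) * (1 - X) = 1 - X := by
        rw [Matrix.sub_mul, Matrix.one_mul, Matrix.mul_sub, Matrix.mul_one, hXX,
          sub_self, sub_zero]
      have h3 : (1 - X)ᵀ = 1 - X := by
        rw [Matrix.transpose_sub, Matrix.transpose_one, hXT]
      have h4 : (1 - X) = (1 - X)ᴴ * (1 - X) := by
        rw [real_conjT, h3, h2]
      rw [h4]; exact Matrix.posSemidef_conjTranspose_mul_self _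
  have hKSMne : KSM.Nonempty :=
    ⟨∑ i, l2norm (E.mulVec (p i)), E, hEE, hET, hrankE, rfl⟩
  have hRELbdd : BddBelow REL := by
    refine ⟨0, ?_⟩
    rintro r ⟨X, y, -, -, -, -, hyi, rfl⟩
    exact Finset.sum_nonneg fun i _ => le_trans (l2norm_nonneg _) (hyi i)
  have hle : ∑ i, ystar i ≤ sInf KSM := by
    rw [hopt]
    exact csInf_le_csInf hRELbdd hKSMne hsub
  -- assemble
  have hsd : (0:ℝ) ≤ Real.sqrt d := Real.sqrt_nonneg _
  calc ∑ i, distToSet (p i) (S : Set (Fin d → ℝ))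
      ≤ ∑ i, l2norm (E *ᵥ p i) := Finset.sum_le_sum fun i _ => hdist i
    _ ≤ ∑ i, ∑ j ∈ Ind, |(V *ᵥ p i) j| := Finset.sum_le_sum fun i _ => hEp i
    _ = ∑ j ∈ Ind, q j := by
        rw [Finset.sum_comm]
        exact Finset.sum_congr rfl fun j _ => (hq j).symm
    _ ≤ ∑ j, Dvec j * q j := hkey
    _ ≤ Real.sqrt d * ∑ i, l2norm (Xstar *ᵥ p i) := hstep
    _ ≤ Real.sqrt d * ∑ i, ystar i := by
        exact mul_le_mul_of_nonneg_left (Finset.sum_le_sum fun i _ => hy i) hsd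
    _ ≤ Real.sqrt d * sInf KSM := mul_le_mul_of_nonneg_left hle hsd
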